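/- Let G be a basic stable graph of genus g ≥ 2 and v ∈ V(G) any vertex. Then 2 ≤ deg(v) ≤ 4, and if deg(v) = 4 then w(v) = 0 and ℓ(v) = 0. Moreover g(v) := loop(v) + w(v) ≤ 2, with g(v) = 2 only if |V(G)| = 1; and if |V(G)| = 1 then g = 2. -/

import Mathlib

/-!
Common combinatorial preliminaries: weighted graphs with legs, contractions,
spin structures, following Caporaso–Melo–Pacini, "Tropicalizing the moduli
space of spin curves".
-/

attribute [local instance] Classical.propDecidable

noncomputable section

/-- A weighted graph with legs.  Edges are recorded as elements of a finite
type `E` together with their (unordered) pair of endpoints `ends e : Sym2 V`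
(a loop corresponds to a diagonal pair); legs are elements of a finite type
`Lg` with an endpoint map `legEnd`; `w` is the weight function. -/
structure LGraph : Type 1 where
  V : Type
  E : Type
  Lg : Type
  fV : Fintype V
  fE : Fintype E
  fL : Fintype Lg
  dV : DecidableEq V
  dE : DecidableEq E
  dL : DecidableEq Lg
  neV : Nonempty V
  ends : E → Sym2 V
  legEnd : Lg → V
  w : V → ℕ

attribute [instance] LGraph.fV LGraph.fE LGraph.fL LGraph.dV LGraph.dE LGraph.dL LGraph.neV

namespace LGraph

variable (G : LGraph)

/-- The multiplicity of the vertex `v` in the edge `e` (`2` for a loop at `v`). -/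
def degMul (v : G.V) (e : G.E) : ℕ :=
  Sym2.lift ⟨fun a b => (if a = v then 1 else 0) + (if b = v then 1 else 0),
    fun _ _ => add_comm _ _⟩ (G.ends e)

/-- The degree of a vertex: number of non-leg half-edges ending at it. -/
def deg (v : G.V) : ℕ := ∑ e, G.degMul v e

/-- The number of legs ending at a vertex. -/
def legsAt (v : G.V) : ℕ := (Finset.univ.filter fun l => G.legEnd l = v).card

/-- The number of loops based at a vertex. -/
def loops (v : G.V) : ℕ := (Finset.univ.filter fun e => G.ends e = Sym2.diag v).card

/-- The boundary map `∂ : E_G → V_G` over `F₂`, sending an edge to the sum of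
its two endpoints. -/
def boundary : (G.E → ZMod 2) →ₗ[ZMod 2] (G.V → ZMod 2) where
  toFun x := fun v => ∑ e, x e * (G.degMul v e : ZMod 2)
  map_add' x y := by
    funext v
    simp [add_mul, Finset.sum_add_distrib]
  map_smul' c x := by
    funext v
    simp [Finset.mul_sum, mul_assoc]

/-- The `F₂`-indicator vector of a set of edges. -/
def indicator (P : Finset G.E) : G.E → ZMod 2 := fun e => if e ∈ P then 1 else 0

/-- A subset of edges is cyclic if it lies in the cycle space `C_G = ker ∂`,
i.e. its indicator vector is killed by the boundary map. -/
def IsCyclic (P : Finset G.E) : Prop := G.boundary (G.indicator P) = 0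

/-- Adjacency through an edge belonging to `P`. -/
def PAdj (P : Finset G.E) (u v : G.V) : Prop :=
  ∃ e ∈ P, u ∈ G.ends e ∧ v ∈ G.ends e

/-- The vertex set of the contraction `G/P`: connected components of `(V, P)`. -/
def CompV (P : Finset G.E) : Type := Quot (G.PAdj P)

instance (P : Finset G.E) : Finite (G.CompV P) := Quot.finite _
instance (P : Finset G.E) : Fintype (G.CompV P) := Fintype.ofFinite _
instance (P : Finset G.E) : Nonempty (G.CompV P) := G.neV.map (Quot.mk _)

/-- The set of vertices of `G` lying in a given component. -/
def fiberV (P : Finset G.E) (x : G.CompV P) : Finset G.V :=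
  Finset.univ.filter fun v => Quot.mk (G.PAdj P) v = x

/-- The set of edges of `P` lying in a given component. -/
def fiberE (P : Finset G.E) (x : G.CompV P) : Finset G.E :=
  P.filter fun e => ∀ v ∈ G.ends e, Quot.mk (G.PAdj P) v = x

/-- The weight of a vertex `x` of `G/P`: the genus of its preimage, i.e. the
sum of the weights of the vertices in the component plus its first Betti
number `#edges - #vertices + 1`. -/
def quotWeight (P : Finset G.E) (x : G.CompV P) : ℕ :=
  (∑ v ∈ G.fiberV P x, G.w v) + ((G.fiberE P x).card + 1 - (G.fiberV P x).card)

/-- Connectedness of the graph. -/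
def Connected : Prop := ∀ u v : G.V, Relation.EqvGen (G.PAdj Finset.univ) u v

/-- The number of connected components `c(G)`. -/
def numComp : ℕ := Nat.card (G.CompV Finset.univ)

/-- The first Betti number `b₁(G) = |E| - |V| + c(G)`. -/
def b1 : ℕ := Fintype.card G.E + G.numComp - Fintype.card G.V

/-- The genus `g(G) = Σ_v w(v) + b₁(G)`. -/
def genus : ℕ := (∑ v, G.w v) + G.b1

/-- The number of legs. -/
def numLegs : ℕ := Fintype.card G.Lg

/-- Stability: connected and `2w(v) - 2 + deg(v) + ℓ(v) > 0` at every vertex. -/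
def Stable : Prop :=
  G.Connected ∧ ∀ v : G.V, 2 < 2 * G.w v + G.deg v + G.legsAt v

/-- `G` is Eulerian (cyclic) if every vertex has even degree, i.e. the set of
all edges lies in the cycle space. -/
def Eulerian : Prop := G.IsCyclic Finset.univ

/-- A basic graph: a stable cyclic (Eulerian) graph of genus `≥ 2` with at
least one edge, all weights `≤ 1`, and `w(v) + deg(v) + ℓ(v) ≤ 4` at every
vertex with equality only if there is a loop at `v`. -/
def IsBasic : Prop :=
  G.Stable ∧ 2 ≤ G.genus ∧ Nonempty G.E ∧ G.Eulerian ∧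
  (∀ v, G.w v ≤ 1) ∧
  (∀ v, G.w v + G.deg v + G.legsAt v ≤ 4) ∧
  (∀ v, G.w v + G.deg v + G.legsAt v = 4 → 1 ≤ G.loops v)

/-- `c⁺`: the number of vertices of `G/P` of positive weight, i.e. the number
of connected components of `P̄` of positive genus. -/
def cPlus (P : Finset G.E) : ℕ :=
  (Finset.univ.filter fun x : G.CompV P => 0 < G.quotWeight P x).card

/-- The contracted graph `G/P`. -/
def contract (P : Finset G.E) : LGraph where
  V := G.CompV P
  E := {e : G.E // e ∉ P}
  Lg := G.Lg
  fV := inferInstance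
  fE := inferInstance
  fL := G.fL
  dV := Classical.decEq _
  dE := inferInstance
  dL := G.dL
  neV := inferInstance
  ends := fun e => (G.ends e.1).map (Quot.mk (G.PAdj P))
  legEnd := fun l => Quot.mk (G.PAdj P) (G.legEnd l)
  w := G.quotWeight P

/-- An ordered pair of endpoints of an edge. -/
def endPair (e : G.E) : G.V × G.V := Classical.choose (Quot.exists_rep (G.ends e))

end LGraph

/-- A spin structure on a graph `G`: a cyclic subset `P` of edges and a sign
function on the vertices of `G/P` vanishing at all vertices of weight `0`. -/
structure SpinStructure (G : LGraph) where
  P : Finset G.E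
  cyclic : G.IsCyclic P
  s : G.CompV P → ZMod 2
  vanish : ∀ x, G.quotWeight P x = 0 → s x = 0

/-- The parity of a spin structure: the parity of `Σ_{v ∈ V(G/P)} s(v)`. -/
def SpinStructure.parity {G : LGraph} (σ : SpinStructure G) : ZMod 2 := ∑ x, σ.s x

/-- A contraction of graphs `γ : G → G' = G/F`: the edges of `G'` are
identified with `E(G) ∖ F`, the legs of `G'` with those of `G`; the vertex
map is surjective, its fibers are exactly the connected components of
`(V(G), F)`, endpoints and legs are compatible, and the weight of a vertex of
`G'` is the genus of its preimage. -/
structure Contraction (G G' : LGraph) where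
  F : Finset G.E
  vMap : G.V → G'.V
  eEquiv : G'.E ≃ {e : G.E // e ∉ F}
  lEquiv : G'.Lg ≃ G.Lg
  vSurj : Function.Surjective vMap
  ends_compat : ∀ e' : G'.E, G'.ends e' = (G.ends (eEquiv e').1).map vMap
  leg_compat : ∀ l' : G'.Lg, G'.legEnd l' = vMap (G.legEnd (lEquiv l'))
  collapse : ∀ e ∈ F, ∀ u ∈ G.ends e, ∀ v ∈ G.ends e, vMap u = vMap v
  fiber_conn : ∀ u v : G.V, vMap u = vMap v → Relation.EqvGen (G.PAdj F) u v
  w_compat : ∀ v' : G'.V,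
    G'.w v' = (∑ v ∈ Finset.univ.filter (fun v => vMap v = v'), G.w v)
      + (((F.filter fun e => ∀ u ∈ G.ends e, vMap u = v').card + 1)
          - (Finset.univ.filter fun v => vMap v = v').card)

namespace Contraction

variable {G G' : LGraph} (γ : Contraction G G')

/-- The induced map `γ^E_* : E_G → E_{G'}` (γ^E_*(e) = e if e ∉ F, 0 else). -/
def eStar : (G.E → ZMod 2) →ₗ[ZMod 2] (G'.E → ZMod 2) where
  toFun x := fun e' => x (γ.eEquiv e').1
  map_add' _ _ := rfl
  map_smul' _ _ := rfl

/-- The induced map `γ^V_* : V_G → V_{G'}`. -/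
def vStar : (G.V → ZMod 2) →ₗ[ZMod 2] (G'.V → ZMod 2) where
  toFun x := fun v' => ∑ v ∈ Finset.univ.filter (fun v => γ.vMap v = v'), x v
  map_add' x y := by
    funext v'
    simp [Finset.sum_add_distrib]
  map_smul' c x := by
    funext v'
    simp [Finset.mul_sum]

/-- The pushforward `γ_* P = P ∖ F` of a set of edges, as a subset of `E(G')`. -/
def pushE (P : Finset G.E) : Finset G'.E :=
  Finset.univ.filter fun e' => (γ.eEquiv e' : {e : G.E // e ∉ γ.F}).1 ∈ P

/-- The graph of the induced map `γ̄ : V(G/P) → V(G'/P')` on components. -/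
def compMapsTo (P : Finset G.E) (P' : Finset G'.E)
    (x : G.CompV P) (x' : G'.CompV P') : Prop :=
  ∃ v : G.V, Quot.mk (G.PAdj P) v = x ∧ Quot.mk (G'.PAdj P') (γ.vMap v) = x'

/-- The pushforward sign function: `s'(v') = Σ_{v ∈ γ̄⁻¹(v')} s(v)`. -/
def pushS (P : Finset G.E) (s : G.CompV P → ZMod 2) :
    G'.CompV (γ.pushE P) → ZMod 2 :=
  fun x' => ∑ x ∈ Finset.univ.filter
    (fun x => γ.compMapsTo P (γ.pushE P) x x'), s x

/-- `γ_* σ = σ'` for spin structures. -/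
def SpinMapsTo (σ : SpinStructure G) (σ' : SpinStructure G') : Prop :=
  σ'.P = γ.pushE σ.P ∧ HEq σ'.s (γ.pushS σ.P σ.s)

end Contraction

/-- An automorphism of a graph: weight-preserving bijection on vertices,
bijection on edges compatible with endpoints, fixing every leg. -/
structure GraphAut (G : LGraph) where
  vE : G.V ≃ G.V
  eE : G.E ≃ G.E
  ends_compat : ∀ e, G.ends (eE e) = (G.ends e).map vE
  w_compat : ∀ v, G.w (vE v) = G.w v
  leg_fix : ∀ l, G.legEnd l = vE (G.legEnd l)

namespace GraphAut

variable {G : LGraph}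

/-- Composition of automorphisms (`α.comp β` acts by `β` first, then `α`). -/
def comp (α β : GraphAut G) : GraphAut G where
  vE := β.vE.trans α.vE
  eE := β.eE.trans α.eE
  ends_compat e := by
    simp only [Equiv.trans_apply, Equiv.coe_trans]
    rw [α.ends_compat, β.ends_compat, Sym2.map_map]
  w_compat v := by
    simp only [Equiv.trans_apply]
    rw [α.w_compat, β.w_compat]
  leg_fix l := by
    simp only [Equiv.trans_apply]
    rw [← β.leg_fix, ← α.leg_fix]

/-- `α_* σ = σ'` for an automorphism `α` and spin structures `σ, σ'`. -/
def SpinMapsTo (α : GraphAut G) (σ σ' : SpinStructure G) : Prop :=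
  σ'.P = σ.P.image α.eE ∧
  ∀ v : G.V, σ'.s (Quot.mk (G.PAdj σ'.P) (α.vE v)) = σ.s (Quot.mk (G.PAdj σ.P) v)

/-- `α` preserves the spin structure `σ`, i.e. `α_*(P,s) = (P,s)`. -/
def PreservesSpin (α : GraphAut G) (σ : SpinStructure G) : Prop :=
  α.SpinMapsTo σ σ

end GraphAut

/-- The graph `P̄ = G - R°` where `R = E ∖ P`: same vertices, edges `P`, and
the legs of `G` together with a pair of new legs for each edge of `R`, placed
at its two endpoints. -/
def LGraph.legify (G : LGraph) (P : Finset G.E) : LGraph where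
  V := G.V
  E := {e : G.E // e ∈ P}
  Lg := G.Lg ⊕ ({e : G.E // e ∉ P} × Bool)
  fV := G.fV
  fE := inferInstance
  fL := inferInstance
  dV := G.dV
  dE := inferInstance
  dL := inferInstance
  neV := G.neV
  ends := fun e => G.ends e.1
  legEnd := fun l =>
    match l with
    | Sum.inl l => G.legEnd l
    | Sum.inr (e, b) => if b then (G.endPair e.1).1 else (G.endPair e.1).2
  w := G.w

/-- `G` is a stable graph of genus `g` with `n` legs. -/
def StG (g n : ℕ) (G : LGraph) : Prop := G.Stable ∧ G.genus = g ∧ G.numLegs = n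

/-- Objects of the poset `C_{g,n}` before taking isomorphism classes. -/
def CycObj : Type 1 := Σ G : LGraph, Finset G.E

/-- Objects of the poset `SP_{g,n}` before taking isomorphism classes. -/
def SpinObj : Type 1 := Σ G : LGraph, SpinStructure G

/-- Order on graphs: `G ≥ G'` iff there is a contraction `G → G'`. -/
def GraphGe (G G' : LGraph) : Prop := Nonempty (Contraction G G')

/-- Order on `C_{g,n}`: `(G,P) ≥ (G',P')` iff some contraction pushes `P` to `P'`. -/
def CycGe (a b : CycObj) : Prop := ∃ γ : Contraction a.1 b.1, γ.pushE a.2 = b.2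

/-- Order on `SP_{g,n}`: `(G,P,s) ≥ (G',P',s')` iff some contraction pushes
`(P,s)` to `(P',s')`. -/
def SpinGe (a b : SpinObj) : Prop := ∃ γ : Contraction a.1 b.1, γ.SpinMapsTo a.2 b.2

/-- `q : X → Y` is a quotient of posets (for the `≥`-relations `geA`, `geB`):
it is surjective, order-preserving, and any relation downstairs lifts. -/
def IsPosetQuotient {α : Sort*} {β : Sort*}
    (geA : α → α → Prop) (geB : β → β → Prop) (q : α → β) : Prop :=
  Function.Surjective q ∧
  (∀ a a', geA a a' → geB (q a) (q a')) ∧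
  (∀ b b', geB b b' → ∃ a a', q a = b ∧ q a' = b' ∧ geA a a')

/-- Strict order `x > y` associated to a `≥`-relation. -/
def StrictGt {α : Sort*} (ge : α → α → Prop) (x y : α) : Prop := ge x y ∧ ¬ ge y x

/-- `x` covers `y`. -/
def Covers {α : Sort*} (ge : α → α → Prop) (x y : α) : Prop :=
  StrictGt ge x y ∧ ¬ ∃ z, StrictGt ge x z ∧ StrictGt ge z y

/-- `ρ` is a rank function for the `≥`-relation `ge`. -/
def IsRankFn {α : Sort*} (ge : α → α → Prop) (ρ : α → ℕ) : Prop :=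
  (∀ x y, StrictGt ge x y → ρ y < ρ x) ∧
  (∀ x y, Covers ge x y → ρ x = ρ y + 1)


namespace LGraph

variable (G : LGraph)

lemma exists_ends (e : G.E) : ∃ a b : G.V, G.ends e = s(a, b) := by
  obtain ⟨⟨a, b⟩, hab⟩ := Quot.exists_rep (G.ends e)
  exact ⟨a, b, hab.symm⟩

lemma degMul_eq {a b : G.V} {e : G.E} (h : G.ends e = s(a, b)) (v : G.V) :
    G.degMul v e = (if a = v then 1 else 0) + (if b = v then 1 else 0) := by
  simp [LGraph.degMul, h]

lemma degMul_diag {v : G.V} {e : G.E} (h : G.ends e = Sym2.diag v) :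
    G.degMul v e = 2 := by
  have h' : G.ends e = s(v, v) := h
  simp [G.degMul_eq h']

lemma one_le_degMul {v : G.V} {e : G.E} (h : v ∈ G.ends e) :
    1 ≤ G.degMul v e := by
  obtain ⟨a, b, hab⟩ := G.exists_ends e
  rw [hab, Sym2.mem_iff] at h
  rw [G.degMul_eq hab]
  rcases h with rfl | rfl <;> simp

lemma two_mul_loops_le_deg (v : G.V) : 2 * G.loops v ≤ G.deg v := by
  rw [LGraph.deg, LGraph.loops]
  calc 2 * (Finset.univ.filter fun e => G.ends e = Sym2.diag v).card
      = ∑ e ∈ Finset.univ.filter (fun e => G.ends e = Sym2.diag v), G.degMul v e := by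
        rw [Finset.sum_congr rfl (fun e he => G.degMul_diag (Finset.mem_filter.mp he).2)]
        simp [Finset.sum_const, mul_comm]
    _ ≤ ∑ e, G.degMul v e := Finset.sum_le_sum_of_subset (Finset.filter_subset _ _)

lemma deg_lower {v : G.V} {e : G.E} (he : v ∈ G.ends e) (hne : G.ends e ≠ Sym2.diag v) :
    2 * G.loops v + 1 ≤ G.deg v := by
  classical
  set L := Finset.univ.filter (fun e : G.E => G.ends e = Sym2.diag v) with hL
  have heL : e ∉ L := by simp [hL, hne]
  have h1 : ∑ f ∈ L, G.degMul v f = 2 * G.loops v := by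
    rw [Finset.sum_congr rfl (fun f hf => G.degMul_diag (Finset.mem_filter.mp hf).2)]
    simp [LGraph.loops, hL, Finset.sum_const, mul_comm]
  have h2 : ∑ f ∈ insert e L, G.degMul v f ≤ G.deg v := by
    rw [LGraph.deg]
    exact Finset.sum_le_sum_of_subset (Finset.subset_univ _)
  rw [Finset.sum_insert heL, h1] at h2
  have h3 := G.one_le_degMul he
  omega

lemma deg_even (heul : G.Eulerian) (v : G.V) : 2 ∣ G.deg v := by
  have h := congrFun heul v
  simp only [LGraph.boundary, LGraph.indicator, LGraph.Eulerian, LGraph.IsCyclic,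
    LinearMap.coe_mk, AddHom.coe_mk, Finset.mem_univ, if_true, one_mul,
    Pi.zero_apply] at h
  rw [← Nat.cast_sum] at h
  rw [LGraph.deg]
  exact (ZMod.natCast_eq_zero_iff _ 2).mp h

lemma eqvGen_fix {v : G.V} (hv : ∀ e, v ∈ G.ends e → G.ends e = Sym2.diag v)
    {a b : G.V} (h : Relation.EqvGen (G.PAdj Finset.univ) a b) : a = v ↔ b = v := by
  induction h with
  | rel x y hxy =>
      obtain ⟨e, _, hx, hy⟩ := hxy
      have key : ∀ z : G.V, z ∈ G.ends e → G.ends e = Sym2.diag v → z = v := by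
        intro z hz hd
        have hd' : G.ends e = s(v, v) := hd
        rw [hd', Sym2.mem_iff] at hz
        exact hz.elim id id
      constructor
      · rintro rfl
        exact key y hy (hv e hx)
      · rintro rfl
        exact key x hx (hv e hy)
  | refl x => exact Iff.rfl
  | symm x y _ ih => exact ih.symm
  | trans x y z _ _ ih1 ih2 => exact ih1.trans ih2

lemma card_one {v : G.V} (hconn : G.Connected)
    (hv : ∀ e, v ∈ G.ends e → G.ends e = Sym2.diag v) : Fintype.card G.V = 1 :=
  Fintype.card_eq_one_iff.mpr ⟨v, fun u => (G.eqvGen_fix hv (hconn u v)).mpr rfl⟩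

lemma two_le_deg (hconn : G.Connected) (heul : G.Eulerian) (hE : Nonempty G.E)
    (v : G.V) : 2 ≤ G.deg v := by
  have hdvd := G.deg_even heul v
  rcases Nat.eq_zero_or_pos (G.deg v) with h0 | hp
  · exfalso
    rw [LGraph.deg] at h0
    have hall : ∀ e, v ∉ G.ends e := by
      intro e he
      have h1 := G.one_le_degMul he
      have h2 := Finset.sum_eq_zero_iff.mp h0 e (Finset.mem_univ e)
      omega
    have hcard := G.card_one hconn (fun e he => absurd he (hall e))
    obtain ⟨e⟩ := hE
    obtain ⟨a, b, hab⟩ := G.exists_ends e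
    obtain ⟨u, hu⟩ := Fintype.card_eq_one_iff.mp hcard
    have hva : a = v := by rw [hu a, hu v]
    exact hall e (by rw [hab, Sym2.mem_iff]; left; exact hva.symm)
  · omega

lemma genus_of_card_one (hb : G.IsBasic) (hcard : Fintype.card G.V = 1) :
    G.genus = 2 := by
  obtain ⟨⟨hconn, hstab⟩, hg2, hE, heul, hw1, hle4, heq4⟩ := hb
  obtain ⟨v, hv⟩ := Fintype.card_eq_one_iff.mp hcard
  have hdiag : ∀ e, G.ends e = Sym2.diag v := by
    intro e
    obtain ⟨a, b, hab⟩ := G.exists_ends e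
    rw [hab, hv a, hv b]
    rfl
  have hdeg : G.deg v = 2 * Fintype.card G.E := by
    rw [LGraph.deg, Finset.sum_congr rfl (fun e _ => G.degMul_diag (hdiag e))]
    simp [mul_comm]
  have hsum : ∑ u, G.w u = G.w v := by
    have huniv : (Finset.univ : Finset G.V) = {v} := by
      ext u; simp [hv u]
    rw [huniv, Finset.sum_singleton]
  have hcomp : G.numComp = 1 := by
    have hsub : Subsingleton (G.CompV Finset.univ) := by
      constructor
      intro x y
      induction x using Quot.ind with | _ a =>
      induction y using Quot.ind with | _ b =>
      rw [hv a, hv b]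
    rw [LGraph.numComp]
    exact Nat.card_eq_one_iff_unique.mpr ⟨hsub, inferInstance⟩
  have hb1 : G.b1 = Fintype.card G.E := by
    rw [LGraph.b1, hcomp, hcard]
    omega
  have h4 := hle4 v
  have hEpos : 1 ≤ Fintype.card G.E := Fintype.card_pos
  have hw := hw1 v
  rw [LGraph.genus, hb1, hsum] at hg2 ⊢
  rw [hdeg] at h4
  omega

end LGraph


/-- Let `G` be a basic stable graph of genus `g ≥ 2` and
`v` any vertex.  Then `2 ≤ deg(v) ≤ 4`; if `deg(v) = 4` then `w(v) = 0` and
`ℓ(v) = 0`.  Moreover `g(v) = loop(v) + w(v) ≤ 2`, with `g(v) = 2` only if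
`|V(G)| = 1`; and if `|V(G)| = 1` then `g = 2`. -/
theorem basic_graph_vertex_facts (G : LGraph) (g : ℕ)
    (hgen : G.genus = g) (hb : G.IsBasic) :
    (∀ v : G.V,
      2 ≤ G.deg v ∧ G.deg v ≤ 4 ∧
      (G.deg v = 4 → G.w v = 0 ∧ G.legsAt v = 0) ∧
      G.loops v + G.w v ≤ 2 ∧
      (G.loops v + G.w v = 2 → Fintype.card G.V = 1)) ∧
    (Fintype.card G.V = 1 → g = 2) := by
  obtain ⟨⟨hconn, hstab⟩, hg2, hE, heul, hw1, hle4, heq4⟩ := id hb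
  constructor
  · intro v
    have hdvd := G.deg_even heul v
    have hge2 : 2 ≤ G.deg v := G.two_le_deg hconn heul hE v
    have h4 := hle4 v
    have hll := G.two_mul_loops_le_deg v
    have hw := hw1 v
    refine ⟨hge2, by omega, fun h => by omega, by omega, ?_⟩
    intro h2
    by_cases hnl : ∃ e, v ∈ G.ends e ∧ G.ends e ≠ Sym2.diag v
    · obtain ⟨e, he, hne⟩ := hnl
      have hlow := G.deg_lower he hne
      omega
    · push_neg at hnl
      exact G.card_one hconn hnl
  · intro hcard
    rw [← hgen]
    exact G.genus_of_card_one hb hcard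

end
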